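/- Define Φ(a) = sup_{t>0} (h(ta) − h(t)) for a ≥ 1, where h(t) = −∫_ℝ f_t(x) log f_t(x) dx and f_t(x) = (φ(x − t) + φ(x + t))/2 with φ(x) = (2π)^{−1/2} e^{−x²/2}. Then lim_{a→∞} Φ(a) = log 2. -/

import Mathlib

/-- The standard Gaussian density. -/
noncomputable def gaussDensity (x : ℝ) : ℝ := (2 * Real.pi) ^ (-(1 / 2 : ℝ)) * Real.exp (-x ^ 2 / 2)

open MeasureTheory Real Filter

lemma gauss_pos (x : ℝ) : 0 < gaussDensity x := by
  unfold gaussDensity; positivity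

lemma gauss_le (x : ℝ) : gaussDensity x ≤ (2 * π) ^ (-(1 / 2 : ℝ)) := by
  have h1 : Real.exp (-x ^ 2 / 2) ≤ 1 := Real.exp_le_one_iff.2 (by nlinarith [sq_nonneg x])
  have h2 : (0:ℝ) < (2 * π) ^ (-(1 / 2 : ℝ)) := by positivity
  calc gaussDensity x ≤ (2 * π) ^ (-(1 / 2 : ℝ)) * 1 := by
        unfold gaussDensity; gcongr
    _ = _ := mul_one _

lemma const_lt_one : (2 * π) ^ (-(1 / 2 : ℝ)) < 1 := by
  rw [show (1:ℝ) = (2*π) ^ (0:ℝ) by simp]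
  apply Real.rpow_lt_rpow_of_exponent_lt
  · nlinarith [Real.pi_gt_three]
  · norm_num

lemma gauss_lt_one (x : ℝ) : gaussDensity x < 1 := lt_of_le_of_lt (gauss_le x) const_lt_one

lemma gauss_even (x : ℝ) : gaussDensity (-x) = gaussDensity x := by
  unfold gaussDensity; rw [neg_pow]; ring_nf

lemma log_gauss (x : ℝ) : Real.log (gaussDensity x) = -(Real.log (2*π) / 2) - x^2/2 := by
  unfold gaussDensity
  rw [Real.log_mul (by positivity) (Real.exp_ne_zero _), Real.log_rpow Real.two_pi_pos,
    Real.log_exp]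
  ring

lemma continuous_gauss : Continuous gaussDensity := by
  unfold gaussDensity; fun_prop

lemma integrable_gauss : Integrable gaussDensity := by
  unfold gaussDensity
  apply Integrable.const_mul
  have : (fun x : ℝ => Real.exp (-x^2/2)) = fun x : ℝ => Real.exp (-(1/2) * x^2) := by
    ext x; ring_nf
  rw [this]
  exact integrable_exp_neg_mul_sq (by norm_num)

lemma integral_gauss : ∫ x : ℝ, gaussDensity x = 1 := by
  unfold gaussDensity
  rw [MeasureTheory.integral_const_mul]
  have : (fun x : ℝ => Real.exp (-x^2/2)) = fun x : ℝ => Real.exp (-(1/2) * x^2) := by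
    ext x; ring_nf
  rw [this, integral_gaussian]
  rw [show π / (1/2 : ℝ) = 2 * π by ring, Real.sqrt_eq_rpow, ← Real.rpow_add Real.two_pi_pos]
  norm_num

lemma integrable_sq_gauss : Integrable (fun x : ℝ => x^2 * gaussDensity x) := by
  have h := integrable_rpow_mul_exp_neg_mul_sq (b := 1/2) (by norm_num)
    (s := (2:ℝ)) (by norm_num)
  have h2 : (fun x : ℝ => x^2 * gaussDensity x)
      = fun x : ℝ => (2*π) ^ (-(1/2:ℝ)) * (x ^ (2:ℝ) * Real.exp (-(1/2) * x^2)) := by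
    ext x
    rw [Real.rpow_two]
    unfold gaussDensity; ring_nf
  rw [h2]
  exact h.const_mul _

lemma integrable_id_gauss : Integrable (fun x : ℝ => x * gaussDensity x) := by
  have h := integrable_rpow_mul_exp_neg_mul_sq (b := 1/2) (by norm_num)
    (s := (1:ℝ)) (by norm_num)
  have h2 : (fun x : ℝ => x * gaussDensity x)
      = fun x : ℝ => (2*π) ^ (-(1/2:ℝ)) * (x ^ (1:ℝ) * Real.exp (-(1/2) * x^2)) := by
    ext x
    rw [Real.rpow_one]
    unfold gaussDensity; ring_nf
  rw [h2]
  exact h.const_mul _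

lemma hasDerivAt_neg_gauss (x : ℝ) : HasDerivAt (fun y => -gaussDensity y) (x * gaussDensity x) x := by
  have h : HasDerivAt (fun y : ℝ => -y^2/2) (-x) x := by
    have := ((hasDerivAt_pow 2 x).neg.div_const 2)
    simpa using this.congr_deriv (by push_cast; ring)
  have h2 := (h.exp.const_mul ((2 * π) ^ (-(1 / 2 : ℝ)))).neg
  unfold gaussDensity
  convert h2 using 1
  · rfl
  · rfl
  · ext y; simp
  · ring

lemma tendsto_gauss_atTop : Tendsto gaussDensity atTop (nhds 0) := by
  have : Tendsto (fun x : ℝ => Real.exp (-x^2/2)) atTop (nhds 0) := by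
    apply Real.tendsto_exp_atBot.comp
    apply Filter.Tendsto.atBot_div_const (by norm_num)
    exact tendsto_neg_atBot_iff.2 (tendsto_pow_atTop (by norm_num))
  have h2 := this.const_mul ((2 * π) ^ (-(1 / 2 : ℝ)))
  rw [mul_zero] at h2
  apply h2.congr
  intro x
  unfold gaussDensity; ring

lemma tendsto_id_gauss_atTop : Tendsto (fun x : ℝ => x * gaussDensity x) atTop (nhds 0) := by
  have h := rpow_mul_exp_neg_mul_sq_isLittleO_exp_neg (b := 1/2) (by norm_num) 1
  have h0 : Tendsto (fun x : ℝ => Real.exp (-(1/2) * x)) atTop (nhds 0) := by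
    apply Real.tendsto_exp_atBot.comp
    exact (tendsto_id.const_mul_atTop_of_neg (by norm_num))
  have h1 : Tendsto (fun x : ℝ => x ^ (1:ℝ) * Real.exp (-(1/2) * x^2)) atTop (nhds 0) :=
    h.isBigO.trans_tendsto h0
  have h2 := h1.const_mul ((2 * π) ^ (-(1 / 2 : ℝ)))
  rw [mul_zero] at h2
  apply h2.congr
  intro x
  rw [Real.rpow_one]
  unfold gaussDensity; ring

lemma integral_id_gauss_Ioi (s : ℝ) : ∫ x in Set.Ioi s, x * gaussDensity x = gaussDensity s := by
  have htop : Tendsto (fun y : ℝ => -gaussDensity y) atTop (nhds 0) := by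
    simpa using tendsto_gauss_atTop.neg
  have := MeasureTheory.integral_Ioi_of_hasDerivAt_of_tendsto
    (f := fun y => -gaussDensity y) (f' := fun x => x * gaussDensity x) (a := s)
    (m := 0) (Continuous.continuousWithinAt (continuous_gauss.neg))
    (fun x _ => hasDerivAt_neg_gauss x) (integrable_id_gauss.integrableOn)
    htop
  rw [this]; ring

lemma hasDerivAt_gauss (x : ℝ) : HasDerivAt gaussDensity (-(x * gaussDensity x)) x := by
  have h := (hasDerivAt_neg_gauss x).neg
  apply h.congr_of_eventuallyEq
  filter_upwards with y using by simp

lemma hasDerivAt_F (x : ℝ) :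
    HasDerivAt (fun y => -(y * gaussDensity y)) (x^2 * gaussDensity x - gaussDensity x) x := by
  have h := ((hasDerivAt_id x).mul (hasDerivAt_gauss x)).neg
  apply h.congr_deriv
  simp; ring

lemma integral_sq_sub_gauss_Ioi :
    ∫ x in Set.Ioi (0:ℝ), (x^2 * gaussDensity x - gaussDensity x) = 0 := by
  have htop : Tendsto (fun y : ℝ => -(y * gaussDensity y)) atTop (nhds 0) := by
    simpa using tendsto_id_gauss_atTop.neg
  have := MeasureTheory.integral_Ioi_of_hasDerivAt_of_tendsto
    (f := fun y => -(y * gaussDensity y)) (a := (0:ℝ)) (m := 0)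
    (Continuous.continuousWithinAt (by exact (continuous_id.mul continuous_gauss).neg))
    (fun x _ => hasDerivAt_F x) ((integrable_sq_gauss.sub integrable_gauss).integrableOn)
    htop
  rw [this]; simp

lemma integral_sq_gauss : ∫ x : ℝ, x^2 * gaussDensity x = 1 := by
  have hint : Integrable (fun x : ℝ => x^2 * gaussDensity x - gaussDensity x) :=
    integrable_sq_gauss.sub integrable_gauss
  have hIic : ∫ x in Set.Iic (0:ℝ), (x^2 * gaussDensity x - gaussDensity x)
      = ∫ x in Set.Ioi (0:ℝ), (x^2 * gaussDensity x - gaussDensity x) := by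
    have e := integral_comp_neg_Iic (0:ℝ) (fun x => x^2 * gaussDensity x - gaussDensity x)
    rw [neg_zero] at e
    rw [← e]
    congr 1
    ext x
    rw [gauss_even, neg_pow]
    ring_nf
  have hsplit := intervalIntegral.integral_Iic_add_Ioi (b := (0:ℝ)) hint.integrableOn hint.integrableOn
  have : ∫ x : ℝ, (x^2 * gaussDensity x - gaussDensity x) = 0 := by
    rw [← hsplit, hIic, integral_sq_sub_gauss_Ioi]; ring
  have h2 := MeasureTheory.integral_sub integrable_sq_gauss integrable_gauss
  rw [this] at h2
  have h3 := integral_gauss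
  linarith [h2.symm]

lemma integral_id_gauss : ∫ x : ℝ, x * gaussDensity x = 0 := by
  have h := integral_neg_eq_self (μ := (volume : Measure ℝ)) (fun x : ℝ => x * gaussDensity x)
  have h2 : (fun x : ℝ => -x * gaussDensity (-x)) = fun x : ℝ => -(x * gaussDensity x) := by
    ext x; rw [gauss_even]; ring
  rw [show (fun x : ℝ => (-x) * gaussDensity (-x)) = _ from h2] at h
  · rw [MeasureTheory.integral_neg] at h
    linarith [h]

lemma setIntegral_Ioi_comp_add (g : ℝ → ℝ) (s c : ℝ) :
    ∫ x in Set.Ioi s, g (x + c) = ∫ x in Set.Ioi (s + c), g x := by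
  rw [← MeasureTheory.integral_indicator measurableSet_Ioi,
    ← MeasureTheory.integral_indicator measurableSet_Ioi,
    ← integral_add_right_eq_self (fun x => (Set.Ioi (s+c)).indicator g x) c]
  congr 1
  ext x
  simp only [Set.indicator_apply, Set.mem_Ioi]
  by_cases h : s < x
  · rw [if_pos h, if_pos (by linarith)]
  · rw [if_neg h, if_neg (by intro hc; exact h (by linarith))]

lemma setIntegral_Iic_comp_add (g : ℝ → ℝ) (s c : ℝ) :
    ∫ x in Set.Iic s, g (x + c) = ∫ x in Set.Iic (s + c), g x := by
  rw [← MeasureTheory.integral_indicator measurableSet_Iic,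
    ← MeasureTheory.integral_indicator measurableSet_Iic,
    ← integral_add_right_eq_self (fun x => (Set.Iic (s+c)).indicator g x) c]
  congr 1
  ext x
  simp only [Set.indicator_apply, Set.mem_Iic]
  by_cases h : x ≤ s
  · rw [if_pos h, if_pos (by linarith)]
  · rw [if_neg h, if_neg (by intro hc; exact h (by linarith))]

noncomputable def gaussTail (s : ℝ) : ℝ := ∫ x in Set.Ioi s, gaussDensity x

lemma gaussTail_nonneg (s : ℝ) : 0 ≤ gaussTail s :=
  MeasureTheory.setIntegral_nonneg measurableSet_Ioi (fun x _ => (gauss_pos x).le)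

lemma gaussTail_le {s : ℝ} (hs : 1 ≤ s) : gaussTail s ≤ gaussDensity s := by
  rw [← integral_id_gauss_Ioi s]
  apply MeasureTheory.setIntegral_mono_on integrable_gauss.integrableOn
    integrable_id_gauss.integrableOn measurableSet_Ioi
  intro x hx
  have hx1 : 1 ≤ x := le_trans hs (le_of_lt hx)
  nth_rewrite 1 [← one_mul (gaussDensity x)]
  exact mul_le_mul_of_nonneg_right hx1 (gauss_pos x).le

lemma tendsto_gaussTail : Tendsto gaussTail atTop (nhds 0) := by
  apply tendsto_of_tendsto_of_tendsto_of_le_of_le' tendsto_const_nhds tendsto_gauss_atTop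
  · exact Eventually.of_forall gaussTail_nonneg
  · filter_upwards [eventually_ge_atTop (1:ℝ)] with s hs using gaussTail_le hs

lemma integrable_gauss_shift (c : ℝ) : Integrable (fun x => gaussDensity (x - c)) :=
  integrable_gauss.comp_sub_right c

lemma integral_gauss_shift (c : ℝ) : ∫ x : ℝ, gaussDensity (x - c) = 1 := by
  rw [integral_sub_right_eq_self gaussDensity c]; exact integral_gauss

lemma integrable_id_gauss_shift (c : ℝ) :
    Integrable (fun x => (x - c) * gaussDensity (x - c)) :=
  integrable_id_gauss.comp_sub_right c

lemma integrable_sq'_gauss_shift (c : ℝ) :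
    Integrable (fun x => (x - c)^2 * gaussDensity (x - c)) :=
  integrable_sq_gauss.comp_sub_right c

lemma integral_sq'_gauss_shift (c : ℝ) : ∫ x : ℝ, (x - c)^2 * gaussDensity (x - c) = 1 := by
  rw [integral_sub_right_eq_self (fun x => x^2 * gaussDensity x) c]; exact integral_sq_gauss

lemma integrable_sq_gauss_shift (c : ℝ) : Integrable (fun x => x^2 * gaussDensity (x - c)) := by
  have h : (fun x : ℝ => x^2 * gaussDensity (x - c))
      = fun x => ((x-c)^2 * gaussDensity (x-c) + (2*c) * ((x-c) * gaussDensity (x-c)))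
        + c^2 * gaussDensity (x-c) := by
    ext x; ring
  rw [h]
  exact ((integrable_sq'_gauss_shift c).add ((integrable_id_gauss_shift c).const_mul _)).add
    ((integrable_gauss_shift c).const_mul _)

lemma integral_sq_gauss_shift (c : ℝ) : ∫ x : ℝ, x^2 * gaussDensity (x - c) = 1 + c^2 := by
  have h : (fun x : ℝ => x^2 * gaussDensity (x - c))
      = fun x => ((x-c)^2 * gaussDensity (x-c) + (2*c) * ((x-c) * gaussDensity (x-c)))
        + c^2 * gaussDensity (x-c) := by
    ext x; ring
  have hA := integrable_sq'_gauss_shift c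
  have hB := (integrable_id_gauss_shift c).const_mul (2*c)
  have hC := (integrable_gauss_shift c).const_mul (c^2)
  have e1 : ∫ x : ℝ, ((x - c) ^ 2 * gaussDensity (x - c)
        + 2 * c * ((x - c) * gaussDensity (x - c)) + c ^ 2 * gaussDensity (x - c))
      = (∫ x : ℝ, ((x - c) ^ 2 * gaussDensity (x - c)
        + 2 * c * ((x - c) * gaussDensity (x - c)))) + ∫ x : ℝ, c ^ 2 * gaussDensity (x - c) :=
    MeasureTheory.integral_add (hA.add hB) hC
  have e2 : ∫ x : ℝ, ((x - c) ^ 2 * gaussDensity (x - c)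
        + 2 * c * ((x - c) * gaussDensity (x - c)))
      = (∫ x : ℝ, (x - c) ^ 2 * gaussDensity (x - c))
        + ∫ x : ℝ, 2 * c * ((x - c) * gaussDensity (x - c)) :=
    MeasureTheory.integral_add hA hB
  rw [h, e1, e2, MeasureTheory.integral_const_mul, MeasureTheory.integral_const_mul,
    integral_sq'_gauss_shift, integral_gauss_shift,
    integral_sub_right_eq_self (fun x => x * gaussDensity x) c, integral_id_gauss]
  ring

lemma setIntegral_gauss_Iic (s : ℝ) (hs : 0 ≤ s) :
    ∫ x in Set.Iic (0:ℝ), gaussDensity (x - s) = gaussTail s := by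
  have h1 : ∫ x in Set.Iic (0:ℝ), gaussDensity (x - s) = ∫ x in Set.Iic (-s), gaussDensity x := by
    have := setIntegral_Iic_comp_add gaussDensity 0 (-s)
    rw [zero_add] at this
    rw [← this]
    congr 1
  have h2 := integral_comp_neg_Iic (-s) gaussDensity
  rw [neg_neg] at h2
  rw [h1]
  show _ = ∫ x in Set.Ioi s, gaussDensity x
  rw [← h2]
  congr 1
  ext x
  rw [gauss_even]

lemma setIntegral_gauss_Ioi_add (s : ℝ) :
    ∫ x in Set.Ioi (0:ℝ), gaussDensity (x + s) = gaussTail s := by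
  have := setIntegral_Ioi_comp_add gaussDensity 0 s
  rw [zero_add] at this
  rw [this]; rfl

lemma setIntegral_negid_gauss_Iic {s : ℝ} (hs : 0 ≤ s) :
    ∫ x in Set.Iic (0:ℝ), (-x) * gaussDensity (x - s) ≤ gaussDensity s := by
  have h1 : ∫ x in Set.Iic (0:ℝ), (-x) * gaussDensity (x - s)
      = ∫ u in Set.Iic (-s), (-(u + s)) * gaussDensity u := by
    have := setIntegral_Iic_comp_add (fun u => (-(u+s)) * gaussDensity u) 0 (-s)
    rw [zero_add] at this
    rw [← this]
    congr 1; ext x; rw [sub_eq_add_neg]; ring_nf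
  have h2 : ∫ u in Set.Iic (-s), (-(u + s)) * gaussDensity u
      = ∫ v in Set.Ioi s, (v - s) * gaussDensity v := by
    have := integral_comp_neg_Iic (-s) (fun v => (v - s) * gaussDensity v)
    rw [neg_neg] at this
    rw [← this]
    congr 1; ext u; rw [gauss_even]; ring_nf
  rw [h1, h2, ← integral_id_gauss_Ioi s]
  apply MeasureTheory.setIntegral_mono_on
    ((integrable_id_gauss.sub (integrable_gauss.const_mul s)).congr ?_).integrableOn
    integrable_id_gauss.integrableOn measurableSet_Ioi
  · intro x hx
    have : 0 ≤ gaussDensity x := (gauss_pos x).le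
    nlinarith [le_of_lt (Set.mem_Ioi.1 hx), this]
  · filter_upwards with x
    simp only [Pi.sub_apply]
    ring

/-- The density of `X₀ * t + G`, where `X₀` is a fair `±1` random variable and `G` an independent
standard Gaussian. -/
noncomputable def mixDensity (t x : ℝ) : ℝ := (gaussDensity (x - t) + gaussDensity (x + t)) / 2

/-- The differential entropy of `X₀ * t + G`. -/
noncomputable def mixEntropy (t : ℝ) : ℝ := -∫ x : ℝ, mixDensity t x * Real.log (mixDensity t x)

lemma mix_pos (t x : ℝ) : 0 < mixDensity t x := by
  unfold mixDensity
  have := gauss_pos (x - t); have := gauss_pos (x + t); linarith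

lemma mix_le_const (t x : ℝ) : mixDensity t x ≤ (2 * π) ^ (-(1 / 2 : ℝ)) := by
  unfold mixDensity
  have := gauss_le (x - t); have := gauss_le (x + t); linarith

lemma mix_lt_one (t x : ℝ) : mixDensity t x < 1 := lt_of_le_of_lt (mix_le_const t x) const_lt_one

lemma continuous_mix (t : ℝ) : Continuous (mixDensity t) := by
  unfold mixDensity
  exact ((continuous_gauss.comp (continuous_id.sub continuous_const)).add
    (continuous_gauss.comp (continuous_id.add continuous_const))).div_const 2

lemma integrable_gauss_add_shift (t : ℝ) : Integrable (fun x => gaussDensity (x + t)) := by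
  have h := integrable_gauss_shift (-t)
  apply h.congr
  filter_upwards with x
  rw [sub_neg_eq_add]

lemma mix_even (t x : ℝ) : mixDensity t (-x) = mixDensity t x := by
  unfold mixDensity
  rw [show -x - t = -(x + t) by ring, show -x + t = -(x - t) by ring, gauss_even, gauss_even]
  ring

lemma integrable_mix (t : ℝ) : Integrable (mixDensity t) := by
  unfold mixDensity
  exact ((integrable_gauss_shift t).add (integrable_gauss_add_shift t)).div_const 2

lemma integral_mix (t : ℝ) : ∫ x : ℝ, mixDensity t x = 1 := by
  unfold mixDensity
  rw [MeasureTheory.integral_div,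
    MeasureTheory.integral_add (integrable_gauss_shift t) (integrable_gauss_add_shift t),
    integral_gauss_shift]
  have : ∫ x : ℝ, gaussDensity (x + t) = 1 := by
    rw [← integral_gauss_shift (-t)]
    congr 1; ext x; rw [sub_neg_eq_add]
  rw [this]; norm_num

lemma log_mix_le (t x : ℝ) : Real.log (mixDensity t x) ≤ -(Real.log (2*π)/2) := by
  calc Real.log (mixDensity t x) ≤ Real.log ((2 * π) ^ (-(1 / 2 : ℝ))) :=
        Real.log_le_log (mix_pos t x) (mix_le_const t x)
    _ = -(Real.log (2*π)/2) := by rw [Real.log_rpow Real.two_pi_pos]; ring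

lemma log_mix_neg (t x : ℝ) : Real.log (mixDensity t x) < 0 :=
  Real.log_neg (mix_pos t x) (mix_lt_one t x)

lemma neg_log_mix_le (t s x : ℝ) (hs : s = t ∨ s = -t) :
    -Real.log (mixDensity t x) ≤ Real.log 2 + Real.log (2*π)/2 + (x - s)^2/2 := by
  have hhalf : gaussDensity (x - s) / 2 ≤ mixDensity t x := by
    unfold mixDensity
    rcases hs with h | h <;> rw [h]
    · have := gauss_pos (x + t); linarith
    · have := gauss_pos (x - t)
      rw [sub_neg_eq_add]
      linarith
  have h1 : Real.log (gaussDensity (x - s) / 2) ≤ Real.log (mixDensity t x) :=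
    Real.log_le_log (by have := gauss_pos (x - s); positivity) hhalf
  rw [Real.log_div (gauss_pos _).ne' (by norm_num), log_gauss] at h1
  linarith

/-- integrability of `gaussDensity (x - s) * log (mixDensity t x)` for `s = ±t`. -/
lemma integrable_gauss_mul_log_mix (t s : ℝ) (hs : s = t ∨ s = -t) :
    Integrable (fun x => gaussDensity (x - s) * Real.log (mixDensity t x)) := by
  have hbound : Integrable (fun x => gaussDensity (x - s)
      * (Real.log 2 + Real.log (2*π)/2 + (x - s)^2/2)) := by
    have h : (fun x => gaussDensity (x - s) * (Real.log 2 + Real.log (2*π)/2 + (x - s)^2/2))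
        = fun x => (Real.log 2 + Real.log (2*π)/2) * gaussDensity (x - s)
          + (1/2) * ((x - s)^2 * gaussDensity (x - s)) := by
      ext x; ring
    rw [h]
    exact ((integrable_gauss_shift s).const_mul _).add
      ((integrable_sq'_gauss_shift s).const_mul _)
  apply hbound.mono'
  · apply Continuous.aestronglyMeasurable
    exact (continuous_gauss.comp (continuous_id.sub continuous_const)).mul
      ((continuous_mix t).log (fun x => (mix_pos t x).ne'))
  · filter_upwards with x
    rw [Real.norm_eq_abs, abs_mul, abs_of_nonneg (gauss_pos (x - s)).le,
      abs_of_neg (log_mix_neg t x)]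
    have h1 := neg_log_mix_le t s x hs
    have h2 : 0 ≤ Real.log 2 + Real.log (2*π)/2 + (x - s)^2/2 := by
      have := neg_log_mix_le t s x hs
      have h3 : 0 < -Real.log (mixDensity t x) := by linarith [log_mix_neg t x]
      linarith
    calc gaussDensity (x - s) * -Real.log (mixDensity t x)
        ≤ gaussDensity (x - s) * (Real.log 2 + Real.log (2*π)/2 + (x - s)^2/2) := by
          apply mul_le_mul_of_nonneg_left h1 (gauss_pos _).le

lemma integrable_mix_mul_log (t : ℝ) :
    Integrable (fun x => mixDensity t x * Real.log (mixDensity t x)) := by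
  have h1 := integrable_gauss_mul_log_mix t t (Or.inl rfl)
  have h2 := integrable_gauss_mul_log_mix t (-t) (Or.inr rfl)
  have h := (h1.add h2).div_const 2
  apply h.congr
  filter_upwards with x
  simp only [Pi.add_apply, sub_neg_eq_add]
  unfold mixDensity
  ring

lemma integrable_gauss_mul_log_gauss (s : ℝ) :
    Integrable (fun x => gaussDensity (x - s) * Real.log (gaussDensity (x - s))) := by
  have h : (fun x => gaussDensity (x - s) * Real.log (gaussDensity (x - s)))
      = fun x => (-(Real.log (2*π)/2)) * gaussDensity (x - s)
        - (1/2) * ((x - s)^2 * gaussDensity (x - s)) := by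
    ext x; rw [log_gauss]; ring
  rw [h]
  exact ((integrable_gauss_shift s).const_mul _).sub ((integrable_sq'_gauss_shift s).const_mul _)

lemma integral_gauss_mul_log_gauss (s : ℝ) :
    ∫ x : ℝ, gaussDensity (x - s) * Real.log (gaussDensity (x - s))
      = -(Real.log (2*π)/2) - 1/2 := by
  have h : (fun x => gaussDensity (x - s) * Real.log (gaussDensity (x - s)))
      = fun x => (-(Real.log (2*π)/2)) * gaussDensity (x - s)
        - (1/2) * ((x - s)^2 * gaussDensity (x - s)) := by
    ext x; rw [log_gauss]; ring
  rw [h, MeasureTheory.integral_sub ((integrable_gauss_shift s).const_mul _)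
      ((integrable_sq'_gauss_shift s).const_mul _),
    MeasureTheory.integral_const_mul, MeasureTheory.integral_const_mul,
    integral_gauss_shift, integral_sq'_gauss_shift]
  ring

lemma integrable_gauss_add_mul_log_mix (t : ℝ) :
    Integrable (fun x => gaussDensity (x + t) * Real.log (mixDensity t x)) := by
  have h := integrable_gauss_mul_log_mix t (-t) (Or.inr rfl)
  apply h.congr
  filter_upwards with x
  rw [sub_neg_eq_add]

lemma mixEntropy_eq (t : ℝ) :
    mixEntropy t = -∫ x : ℝ, gaussDensity (x - t) * Real.log (mixDensity t x) := by
  have hq : ∫ x : ℝ, gaussDensity (x + t) * Real.log (mixDensity t x)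
      = ∫ x : ℝ, gaussDensity (x - t) * Real.log (mixDensity t x) := by
    have h := integral_neg_eq_self (μ := (volume : Measure ℝ))
      (fun x => gaussDensity (x - t) * Real.log (mixDensity t x))
    rw [← h]
    congr 1
    ext x
    rw [mix_even, show -x - t = -(x + t) by ring, gauss_even]
  have hsplit : ∫ x : ℝ, mixDensity t x * Real.log (mixDensity t x)
      = ((∫ x : ℝ, gaussDensity (x - t) * Real.log (mixDensity t x))
        + ∫ x : ℝ, gaussDensity (x + t) * Real.log (mixDensity t x)) / 2 := by
    rw [← MeasureTheory.integral_add (integrable_gauss_mul_log_mix t t (Or.inl rfl))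
      (integrable_gauss_add_mul_log_mix t), ← MeasureTheory.integral_div]
    congr 1
    ext x
    unfold mixDensity
    ring
  unfold mixEntropy
  rw [hsplit, hq]
  ring

/-- Upper bound: `h(t) ≤ log 2 + log(2π)/2 + 1/2`. -/
lemma mixEntropy_le_log_two_add (t : ℝ) :
    mixEntropy t ≤ Real.log 2 + (Real.log (2*π)/2 + 1/2) := by
  rw [mixEntropy_eq]
  have hmono : ∫ x : ℝ, (gaussDensity (x - t) * Real.log (gaussDensity (x - t))
        - Real.log 2 * gaussDensity (x - t))
      ≤ ∫ x : ℝ, gaussDensity (x - t) * Real.log (mixDensity t x) := by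
    apply MeasureTheory.integral_mono
      ((integrable_gauss_mul_log_gauss t).sub ((integrable_gauss_shift t).const_mul _))
      (integrable_gauss_mul_log_mix t t (Or.inl rfl))
    intro x
    have hhalf : gaussDensity (x - t) / 2 ≤ mixDensity t x := by
      unfold mixDensity
      have := gauss_pos (x + t); linarith
    have h1 : Real.log (gaussDensity (x - t) / 2) ≤ Real.log (mixDensity t x) :=
      Real.log_le_log (by have := gauss_pos (x - t); positivity) hhalf
    rw [Real.log_div (gauss_pos _).ne' (by norm_num)] at h1
    have hp := (gauss_pos (x - t)).le
    simp only [Pi.sub_apply]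
    nlinarith [mul_le_mul_of_nonneg_left h1 hp]
  have hval : ∫ x : ℝ, (gaussDensity (x - t) * Real.log (gaussDensity (x - t))
        - Real.log 2 * gaussDensity (x - t))
      = (-(Real.log (2*π)/2) - 1/2) - Real.log 2 := by
    rw [MeasureTheory.integral_sub (integrable_gauss_mul_log_gauss t)
        ((integrable_gauss_shift t).const_mul _),
      MeasureTheory.integral_const_mul, integral_gauss_shift, integral_gauss_mul_log_gauss]
    ring
  rw [hval] at hmono
  linarith

/-- Lower bound by concavity: `h(t) ≥ log(2π)/2 + 1/2`. -/
lemma le_mixEntropy (t : ℝ) : Real.log (2*π)/2 + 1/2 ≤ mixEntropy t := by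
  have hconc := Real.concaveOn_negMulLog
  have hmono : ∫ x : ℝ, ((-(gaussDensity (x - t) * Real.log (gaussDensity (x - t))))/2
        + (-(gaussDensity (x + t) * Real.log (gaussDensity (x + t))))/2)
      ≤ ∫ x : ℝ, -(mixDensity t x * Real.log (mixDensity t x)) := by
    apply MeasureTheory.integral_mono
    · apply Integrable.add
      · exact ((integrable_gauss_mul_log_gauss t).neg.div_const 2)
      · apply Integrable.div_const
        apply Integrable.neg
        have h := integrable_gauss_mul_log_gauss (-t)
        apply h.congr
        filter_upwards with x
        rw [sub_neg_eq_add]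
    · exact (integrable_mix_mul_log t).neg
    intro x
    have h := hconc.2 (Set.mem_Ici.2 (gauss_pos (x - t)).le)
      (Set.mem_Ici.2 (gauss_pos (x + t)).le)
      (by norm_num : (0:ℝ) ≤ 1/2) (by norm_num : (0:ℝ) ≤ 1/2) (by norm_num)
    simp only [smul_eq_mul, Real.negMulLog] at h
    have hmix : mixDensity t x = 1/2 * gaussDensity (x - t) + 1/2 * gaussDensity (x + t) := by
      unfold mixDensity; ring
    dsimp only
    rw [hmix]
    nlinarith [h]
  have hval : ∫ x : ℝ, ((-(gaussDensity (x - t) * Real.log (gaussDensity (x - t))))/2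
        + (-(gaussDensity (x + t) * Real.log (gaussDensity (x + t))))/2)
      = Real.log (2*π)/2 + 1/2 := by
    have hq : Integrable (fun x => gaussDensity (x + t) * Real.log (gaussDensity (x + t))) := by
      have h := integrable_gauss_mul_log_gauss (-t)
      apply h.congr
      filter_upwards with x
      rw [sub_neg_eq_add]
    have hqv : ∫ x : ℝ, gaussDensity (x + t) * Real.log (gaussDensity (x + t))
        = -(Real.log (2*π)/2) - 1/2 := by
      rw [← integral_gauss_mul_log_gauss (-t)]
      congr 1
      ext x
      rw [sub_neg_eq_add]
    have e1 : ∫ x : ℝ, ((-(gaussDensity (x - t) * Real.log (gaussDensity (x - t))))/2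
          + (-(gaussDensity (x + t) * Real.log (gaussDensity (x + t))))/2)
        = (∫ x : ℝ, (-(gaussDensity (x - t) * Real.log (gaussDensity (x - t))))/2)
          + ∫ x : ℝ, (-(gaussDensity (x + t) * Real.log (gaussDensity (x + t))))/2 :=
      MeasureTheory.integral_add ((integrable_gauss_mul_log_gauss t).neg.div_const 2)
        ((hq.neg).div_const 2)
    rw [e1, MeasureTheory.integral_div, MeasureTheory.integral_div,
      MeasureTheory.integral_neg, MeasureTheory.integral_neg,
      integral_gauss_mul_log_gauss, hqv]
    ring
  rw [hval] at hmono
  unfold mixEntropy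
  rw [← MeasureTheory.integral_neg]
  exact hmono

lemma integrable_sq_gauss_add_shift (t : ℝ) :
    Integrable (fun x => x^2 * gaussDensity (x + t)) := by
  have h := integrable_sq_gauss_shift (-t)
  apply h.congr
  filter_upwards with x
  rw [sub_neg_eq_add]

lemma integral_sq_gauss_add_shift (t : ℝ) : ∫ x : ℝ, x^2 * gaussDensity (x + t) = 1 + t^2 := by
  have h := integral_sq_gauss_shift (-t)
  rw [neg_pow] at h
  simp only [sub_neg_eq_add] at h
  rw [h]
  ring

lemma integrable_sq_mix (t : ℝ) : Integrable (fun x => x^2 * mixDensity t x) := by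
  have h := ((integrable_sq_gauss_shift t).add (integrable_sq_gauss_add_shift t)).div_const 2
  apply h.congr
  filter_upwards with x
  simp only [Pi.add_apply]
  unfold mixDensity
  ring

lemma integral_sq_mix (t : ℝ) : ∫ x : ℝ, x^2 * mixDensity t x = 1 + t^2 := by
  have e0 : (fun x : ℝ => x^2 * mixDensity t x)
      = fun x => (x^2 * gaussDensity (x - t) + x^2 * gaussDensity (x + t)) / 2 := by
    ext x; unfold mixDensity; ring
  rw [e0, MeasureTheory.integral_div]
  have e1 : ∫ x : ℝ, (x^2 * gaussDensity (x - t) + x^2 * gaussDensity (x + t))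
      = (∫ x : ℝ, x^2 * gaussDensity (x - t)) + ∫ x : ℝ, x^2 * gaussDensity (x + t) :=
    MeasureTheory.integral_add (integrable_sq_gauss_shift t) (integrable_sq_gauss_add_shift t)
  rw [e1, integral_sq_gauss_shift, integral_sq_gauss_add_shift]
  ring

lemma integrable_mix_mul_log_gauss (t : ℝ) :
    Integrable (fun x => mixDensity t x * Real.log (gaussDensity x)) := by
  have h : (fun x => mixDensity t x * Real.log (gaussDensity x))
      = fun x => (-(Real.log (2*π)/2)) * mixDensity t x - (1/2) * (x^2 * mixDensity t x) := by
    ext x; rw [log_gauss]; ring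
  rw [h]
  exact ((integrable_mix t).const_mul _).sub ((integrable_sq_mix t).const_mul _)

lemma integral_mix_mul_log_gauss (t : ℝ) :
    ∫ x : ℝ, mixDensity t x * Real.log (gaussDensity x)
      = -(Real.log (2*π)/2) - (1 + t^2)/2 := by
  have h : (fun x => mixDensity t x * Real.log (gaussDensity x))
      = fun x => (-(Real.log (2*π)/2)) * mixDensity t x - (1/2) * (x^2 * mixDensity t x) := by
    ext x; rw [log_gauss]; ring
  rw [h, MeasureTheory.integral_sub ((integrable_mix t).const_mul _)
      ((integrable_sq_mix t).const_mul _), MeasureTheory.integral_const_mul,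
    MeasureTheory.integral_const_mul, integral_mix, integral_sq_mix]
  ring

/-- Gibbs: `h(t) ≤ log(2π)/2 + (1 + t²)/2`. -/
lemma mixEntropy_le_gibbs (t : ℝ) :
    mixEntropy t ≤ Real.log (2*π)/2 + (1 + t^2)/2 := by
  have hmono : ∫ x : ℝ, (mixDensity t x * Real.log (gaussDensity x)
        + (mixDensity t x - gaussDensity x))
      ≤ ∫ x : ℝ, mixDensity t x * Real.log (mixDensity t x) := by
    apply MeasureTheory.integral_mono
      ((integrable_mix_mul_log_gauss t).add ((integrable_mix t).sub integrable_gauss))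
      (integrable_mix_mul_log t)
    intro x
    simp only [Pi.add_apply, Pi.sub_apply]
    have ha := mix_pos t x
    have hb := gauss_pos x
    have hlog := Real.log_le_sub_one_of_pos (div_pos hb ha)
    rw [Real.log_div hb.ne' ha.ne'] at hlog
    have h2 : gaussDensity x / mixDensity t x - 1
        = (gaussDensity x - mixDensity t x) / mixDensity t x := by field_simp
    rw [h2] at hlog
    have h3 := mul_le_mul_of_nonneg_left hlog ha.le
    rw [mul_div_cancel₀] at h3
    · nlinarith
    · exact ha.ne'
  have hval : ∫ x : ℝ, (mixDensity t x * Real.log (gaussDensity x)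
        + (mixDensity t x - gaussDensity x))
      = -(Real.log (2*π)/2) - (1 + t^2)/2 := by
    have e1 : ∫ x : ℝ, (mixDensity t x * Real.log (gaussDensity x)
          + (mixDensity t x - gaussDensity x))
        = (∫ x : ℝ, mixDensity t x * Real.log (gaussDensity x))
          + ∫ x : ℝ, (mixDensity t x - gaussDensity x) :=
      MeasureTheory.integral_add (integrable_mix_mul_log_gauss t)
        ((integrable_mix t).sub integrable_gauss)
    rw [e1, MeasureTheory.integral_sub (integrable_mix t) integrable_gauss,
      integral_mix, integral_gauss, integral_mix_mul_log_gauss]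
    ring
  rw [hval] at hmono
  unfold mixEntropy
  linarith

lemma log_mix_explicit (s x : ℝ) :
    Real.log (mixDensity s x)
      = Real.log (gaussDensity (x - s) + gaussDensity (x + s)) - Real.log 2 := by
  unfold mixDensity
  rw [Real.log_div (by have := gauss_pos (x - s); have := gauss_pos (x + s); positivity)
    (by norm_num)]

lemma integrable_gauss_gap (s : ℝ) :
    Integrable (fun x => gaussDensity (x - s) * (Real.log (mixDensity s x)
      - Real.log (gaussDensity (x - s)) + Real.log 2)) := by
  have h : (fun x => gaussDensity (x - s) * (Real.log (mixDensity s x)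
        - Real.log (gaussDensity (x - s)) + Real.log 2))
      = fun x => gaussDensity (x - s) * Real.log (mixDensity s x)
        - (gaussDensity (x - s) * Real.log (gaussDensity (x - s))
          - Real.log 2 * gaussDensity (x - s)) := by
    ext x; ring
  rw [h]
  exact (integrable_gauss_mul_log_mix s s (Or.inl rfl)).sub
    ((integrable_gauss_mul_log_gauss s).sub ((integrable_gauss_shift s).const_mul _))

lemma integral_gauss_gap_eq (s : ℝ) :
    ∫ x : ℝ, gaussDensity (x - s) * (Real.log (mixDensity s x)
        - Real.log (gaussDensity (x - s)) + Real.log 2)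
      = (∫ x : ℝ, gaussDensity (x - s) * Real.log (mixDensity s x))
        + (Real.log (2*π)/2 + 1/2) + Real.log 2 := by
  have h : (fun x => gaussDensity (x - s) * (Real.log (mixDensity s x)
        - Real.log (gaussDensity (x - s)) + Real.log 2))
      = fun x => gaussDensity (x - s) * Real.log (mixDensity s x)
        - (gaussDensity (x - s) * Real.log (gaussDensity (x - s))
          - Real.log 2 * gaussDensity (x - s)) := by
    ext x; ring
  rw [h]
  have e1 : ∫ x : ℝ, (gaussDensity (x - s) * Real.log (mixDensity s x)
        - (gaussDensity (x - s) * Real.log (gaussDensity (x - s))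
          - Real.log 2 * gaussDensity (x - s)))
      = (∫ x : ℝ, gaussDensity (x - s) * Real.log (mixDensity s x))
        - ∫ x : ℝ, (gaussDensity (x - s) * Real.log (gaussDensity (x - s))
          - Real.log 2 * gaussDensity (x - s)) :=
    MeasureTheory.integral_sub (integrable_gauss_mul_log_mix s s (Or.inl rfl))
      ((integrable_gauss_mul_log_gauss s).sub ((integrable_gauss_shift s).const_mul _))
  have e2 : ∫ x : ℝ, (gaussDensity (x - s) * Real.log (gaussDensity (x - s))
        - Real.log 2 * gaussDensity (x - s))
      = (∫ x : ℝ, gaussDensity (x - s) * Real.log (gaussDensity (x - s)))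
        - ∫ x : ℝ, Real.log 2 * gaussDensity (x - s) :=
    MeasureTheory.integral_sub (integrable_gauss_mul_log_gauss s)
      ((integrable_gauss_shift s).const_mul _)
  rw [e1, e2, MeasureTheory.integral_const_mul, integral_gauss_shift,
    integral_gauss_mul_log_gauss]
  ring

lemma integrable_negid_gauss_shift (s : ℝ) :
    Integrable (fun x => (-x) * gaussDensity (x - s)) := by
  have h : (fun x => (-x) * gaussDensity (x - s))
      = fun x => -((x - s) * gaussDensity (x - s)) - s * gaussDensity (x - s) := by
    ext x; ring
  rw [h]
  exact (integrable_id_gauss_shift s).neg.sub ((integrable_gauss_shift s).const_mul _)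

lemma gauss_gap_le_q (s x : ℝ) :
    gaussDensity (x - s) * (Real.log (mixDensity s x)
      - Real.log (gaussDensity (x - s)) + Real.log 2) ≤ gaussDensity (x + s) := by
  have hp := gauss_pos (x - s)
  have hq := gauss_pos (x + s)
  rw [log_mix_explicit]
  have hlog := Real.log_le_sub_one_of_pos
    (show (0:ℝ) < (gaussDensity (x - s) + gaussDensity (x + s)) / gaussDensity (x - s) from
      div_pos (by linarith) hp)
  rw [Real.log_div (by linarith) hp.ne'] at hlog
  have h4 : (gaussDensity (x - s) + gaussDensity (x + s)) / gaussDensity (x - s) - 1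
      = gaussDensity (x + s) / gaussDensity (x - s) := by field_simp; ring
  rw [h4] at hlog
  have h5 := mul_le_mul_of_nonneg_left hlog hp.le
  have h6 : gaussDensity (x - s) * (gaussDensity (x + s) / gaussDensity (x - s))
      = gaussDensity (x + s) := by field_simp
  nlinarith [h5, h6]

lemma gauss_gap_le_left {s : ℝ} (hs : 0 ≤ s) {x : ℝ} (hx : x ≤ 0) :
    gaussDensity (x - s) * (Real.log (mixDensity s x)
      - Real.log (gaussDensity (x - s)) + Real.log 2)
      ≤ Real.log 2 * gaussDensity (x - s) + (2*s) * ((-x) * gaussDensity (x - s)) := by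
  have hp := gauss_pos (x - s)
  have hq := gauss_pos (x + s)
  have hpq : gaussDensity (x - s) ≤ gaussDensity (x + s) := by
    unfold gaussDensity
    have h2 : Real.exp (-(x - s)^2/2) ≤ Real.exp (-(x + s)^2/2) :=
      Real.exp_le_exp.2 (by nlinarith)
    have h3 : (0:ℝ) < (2 * π) ^ (-(1 / 2 : ℝ)) := by positivity
    exact mul_le_mul_of_nonneg_left h2 h3.le
  have hlpq : Real.log (gaussDensity (x - s) + gaussDensity (x + s))
      ≤ Real.log 2 + Real.log (gaussDensity (x + s)) := by
    rw [← Real.log_mul (by norm_num) hq.ne']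
    exact Real.log_le_log (by linarith) (by linarith)
  have hlq : Real.log (gaussDensity (x + s)) = -(Real.log (2*π)/2) - (x + s)^2/2 :=
    log_gauss (x + s)
  have hlp : Real.log (gaussDensity (x - s)) = -(Real.log (2*π)/2) - (x - s)^2/2 :=
    log_gauss (x - s)
  rw [log_mix_explicit]
  have hkey : Real.log (gaussDensity (x - s) + gaussDensity (x + s))
      - Real.log 2 - Real.log (gaussDensity (x - s)) + Real.log 2
      ≤ Real.log 2 + (2*s) * (-x) := by
    rw [hlp] at *
    rw [hlq] at hlpq
    nlinarith
  have h5 := mul_le_mul_of_nonneg_left hkey hp.le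
  nlinarith

/-- Asymptotic lower bound for the entropy of the mixture. -/
lemma mixEntropy_ge {s : ℝ} (hs : 0 ≤ s) :
    Real.log 2 + (Real.log (2*π)/2 + 1/2)
      - ((1 + Real.log 2) * gaussTail s + 2*s*gaussDensity s) ≤ mixEntropy s := by
  set g : ℝ → ℝ := fun x => gaussDensity (x - s) * (Real.log (mixDensity s x)
    - Real.log (gaussDensity (x - s)) + Real.log 2) with hg_def
  have hg_int : Integrable g := integrable_gauss_gap s
  have hEnt : mixEntropy s = Real.log 2 + (Real.log (2*π)/2 + 1/2) - ∫ x : ℝ, g x := by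
    rw [mixEntropy_eq s, hg_def]
    rw [integral_gauss_gap_eq s]
    ring
  rw [hEnt]
  have hsplit : ∫ x : ℝ, g x = (∫ x in Set.Iic (0:ℝ), g x) + ∫ x in Set.Ioi (0:ℝ), g x :=
    (intervalIntegral.integral_Iic_add_Ioi hg_int.integrableOn hg_int.integrableOn).symm
  have b1 : ∫ x in Set.Ioi (0:ℝ), g x ≤ gaussTail s := by
    rw [← setIntegral_gauss_Ioi_add s]
    apply MeasureTheory.setIntegral_mono_on hg_int.integrableOn
      (integrable_gauss_add_shift s).integrableOn measurableSet_Ioi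
    intro x _
    exact gauss_gap_le_q s x
  have hb_int : Integrable (fun x => Real.log 2 * gaussDensity (x - s)
      + (2*s) * ((-x) * gaussDensity (x - s))) :=
    ((integrable_gauss_shift s).const_mul _).add ((integrable_negid_gauss_shift s).const_mul _)
  have b2 : ∫ x in Set.Iic (0:ℝ), g x
      ≤ Real.log 2 * gaussTail s + (2*s) * gaussDensity s := by
    have step1 : ∫ x in Set.Iic (0:ℝ), g x
        ≤ ∫ x in Set.Iic (0:ℝ), (Real.log 2 * gaussDensity (x - s)
          + (2*s) * ((-x) * gaussDensity (x - s))) := by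
      apply MeasureTheory.setIntegral_mono_on hg_int.integrableOn
        hb_int.integrableOn measurableSet_Iic
      intro x hx
      exact gauss_gap_le_left hs (Set.mem_Iic.1 hx)
    have step2 : ∫ x in Set.Iic (0:ℝ), (Real.log 2 * gaussDensity (x - s)
          + (2*s) * ((-x) * gaussDensity (x - s)))
        = Real.log 2 * (∫ x in Set.Iic (0:ℝ), gaussDensity (x - s))
          + (2*s) * ∫ x in Set.Iic (0:ℝ), ((-x) * gaussDensity (x - s)) := by
      have e1 : ∫ x in Set.Iic (0:ℝ), (Real.log 2 * gaussDensity (x - s)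
            + (2*s) * ((-x) * gaussDensity (x - s)))
          = (∫ x in Set.Iic (0:ℝ), Real.log 2 * gaussDensity (x - s))
            + ∫ x in Set.Iic (0:ℝ), (2*s) * ((-x) * gaussDensity (x - s)) :=
        MeasureTheory.integral_add ((integrable_gauss_shift s).const_mul _).integrableOn
          ((integrable_negid_gauss_shift s).const_mul _).integrableOn
      rw [e1, MeasureTheory.integral_const_mul, MeasureTheory.integral_const_mul]
    have step3 : (2*s) * ∫ x in Set.Iic (0:ℝ), ((-x) * gaussDensity (x - s))
        ≤ (2*s) * gaussDensity s :=
      mul_le_mul_of_nonneg_left (setIntegral_negid_gauss_Iic hs) (by linarith)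
    rw [setIntegral_gauss_Iic s hs] at step2
    calc ∫ x in Set.Iic (0:ℝ), g x
        ≤ _ := step1
      _ = _ := step2
      _ ≤ Real.log 2 * gaussTail s + (2*s) * gaussDensity s := by linarith
  have := gaussTail_nonneg s
  rw [hsplit]
  have hlog2 : (0:ℝ) ≤ Real.log 2 := Real.log_nonneg one_le_two
  nlinarith [b1, b2]

/-- `entropyGap a = sup_(t > 0) (h (t * a) - h t)`, where `h` is the differential entropy of
`X₀ * t + G`. -/
noncomputable def entropyGap (a : ℝ) : ℝ :=
  sSup ((fun t : ℝ => mixEntropy (t * a) - mixEntropy t) '' Set.Ioi 0)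

lemma gap_mem_le (a : ℝ) : ∀ y ∈ (fun t : ℝ => mixEntropy (t * a) - mixEntropy t) '' Set.Ioi 0,
    y ≤ Real.log 2 := by
  rintro y ⟨t, _, rfl⟩
  have h1 := mixEntropy_le_log_two_add (t * a)
  have h2 := le_mixEntropy t
  dsimp only
  linarith

lemma entropyGap_le (a : ℝ) : entropyGap a ≤ Real.log 2 :=
  Real.sSup_le (gap_mem_le a) (Real.log_nonneg one_le_two)

lemma tendsto_sqrt_atTop : Tendsto Real.sqrt atTop atTop := by
  rw [tendsto_atTop_atTop]
  intro b
  refine ⟨b^2 + 1, fun a ha => ?_⟩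
  rcases le_or_gt b 0 with hb | hb
  · exact le_trans hb (Real.sqrt_nonneg a)
  · have h1 : b^2 ≤ a := by linarith
    calc b = Real.sqrt (b^2) := by rw [Real.sqrt_sq hb.le]
      _ ≤ Real.sqrt a := Real.sqrt_le_sqrt h1

lemma entropyGap_ge {a : ℝ} (ha : 1 ≤ a) :
    Real.log 2 - ((1 + Real.log 2) * gaussTail (Real.sqrt a)
      + 2 * Real.sqrt a * gaussDensity (Real.sqrt a)) - a⁻¹/2 ≤ entropyGap a := by
  have ha0 : 0 < a := lt_of_lt_of_le one_pos ha
  have hsq : 0 < Real.sqrt a := Real.sqrt_pos.2 ha0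
  have hmem : mixEntropy ((Real.sqrt a)⁻¹ * a) - mixEntropy (Real.sqrt a)⁻¹
      ∈ (fun t : ℝ => mixEntropy (t * a) - mixEntropy t) '' Set.Ioi 0 :=
    ⟨(Real.sqrt a)⁻¹, Set.mem_Ioi.2 (inv_pos.2 hsq), rfl⟩
  have hbdd : BddAbove ((fun t : ℝ => mixEntropy (t * a) - mixEntropy t) '' Set.Ioi 0) :=
    ⟨Real.log 2, fun y hy => gap_mem_le a y hy⟩
  have hle := le_csSup hbdd hmem
  have harg : (Real.sqrt a)⁻¹ * a = Real.sqrt a := by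
    rw [inv_mul_eq_div, Real.div_sqrt]
  rw [harg] at hle
  have h1 := mixEntropy_ge (Real.sqrt_nonneg a)
  have h2 := mixEntropy_le_gibbs (Real.sqrt a)⁻¹
  have h3 : ((Real.sqrt a)⁻¹)^2 = a⁻¹ := by
    rw [inv_pow, Real.sq_sqrt ha0.le]
  rw [h3] at h2
  unfold entropyGap
  linarith

/-- `entropyGap a → log 2` as `a → ∞`. -/
theorem tendsto_entropyGap_log_two :
    Filter.Tendsto entropyGap Filter.atTop (nhds (Real.log 2)) := by
  have hA : Tendsto (fun a => gaussTail (Real.sqrt a)) atTop (nhds 0) :=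
    tendsto_gaussTail.comp _root_.tendsto_sqrt_atTop
  have hB : Tendsto (fun a => 2 * Real.sqrt a * gaussDensity (Real.sqrt a)) atTop (nhds 0) := by
    have h := (tendsto_id_gauss_atTop.const_mul 2).comp _root_.tendsto_sqrt_atTop
    rw [mul_zero] at h
    apply h.congr
    intro a
    simp only [Function.comp_apply]
    ring
  have hC : Tendsto (fun a : ℝ => a⁻¹/2) atTop (nhds 0) := by
    have := tendsto_inv_atTop_zero (𝕜 := ℝ)
    have h2 := this.div_const 2
    simpa using h2
  have hlower : Tendsto (fun a => Real.log 2 - ((1 + Real.log 2) * gaussTail (Real.sqrt a)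
      + 2 * Real.sqrt a * gaussDensity (Real.sqrt a)) - a⁻¹/2) atTop (nhds (Real.log 2)) := by
    have h := (((hA.const_mul (1 + Real.log 2)).add hB).const_sub (Real.log 2)).sub hC
    simpa using h
  apply tendsto_of_tendsto_of_tendsto_of_le_of_le' hlower tendsto_const_nhds
  · filter_upwards [eventually_ge_atTop (1:ℝ)] with a ha using entropyGap_ge ha
  · filter_upwards with a using entropyGap_le a
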